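/- Let A be an R-transient irreducible nonnegative matrix on a countable set S (with ρ(A) < ∞ and Σ_n ρ(A)^{-n}A^n(x,x) < ∞) and let S' ⊆ S be finite. Then there exists h : S → (0,∞) with Σ_y A(x,y)h(y) ≤ ρ(A)h(x) for all x ∈ S, and with strict inequality Σ_y A(x,y)h(y) < ρ(A)h(x) for all x ∈ S'. -/

import Mathlib

open scoped ENNReal
open Filter

variable {S : Type*}

/-- Matrix powers of a nonnegative (possibly infinite-sum) matrix on a countable set. -/
noncomputable def matPow [DecidableEq S] (A : S → S → ℝ≥0∞) : ℕ → S → S → ℝ≥0∞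
  | 0 => fun x y => if x = y then 1 else 0
  | n + 1 => fun x y => ∑' z, matPow A n x z * A z y

lemma matPow_add' [DecidableEq S] (A : S → S → ℝ≥0∞) (m n : ℕ) (x y : S) :
    matPow A (m + n) x y = ∑' z, matPow A m x z * matPow A n z y := by
  induction n generalizing y with
  | zero =>
    rw [tsum_eq_single y (fun z hz => by simp [matPow, hz])]
    simp [matPow]
  | succ n ih =>
    show matPow A ((m + n) + 1) x y = _
    rw [show ((m+n)+1) = (m+n)+1 from rfl]
    calc matPow A ((m+n)+1) x y = ∑' z, matPow A (m+n) x z * A z y := rfl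
      _ = ∑' z, (∑' w, matPow A m x w * matPow A n w z) * A z y := by
          simp_rw [ih]
      _ = ∑' z, ∑' w, matPow A m x w * (matPow A n w z * A z y) := by
          rw [show (∑' z, (∑' w, matPow A m x w * matPow A n w z) * A z y) = ∑' z, ∑' w, (matPow A m x w * matPow A n w z) * A z y by simp_rw [ENNReal.tsum_mul_right]]
          simp_rw [mul_assoc]
      _ = ∑' w, matPow A m x w * ∑' z, matPow A n w z * A z y := by
          rw [ENNReal.tsum_comm]; simp_rw [← ENNReal.tsum_mul_left]
      _ = ∑' w, matPow A m x w * matPow A (n+1) w y := rfl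

lemma matPow_one [DecidableEq S] (A : S → S → ℝ≥0∞) (x y : S) :
    matPow A 1 x y = A x y := by
  show (∑' z, matPow A 0 x z * A z y) = A x y
  rw [tsum_eq_single x (fun z hz => by simp [matPow, (Ne.symm hz)])]
  simp [matPow]

lemma matPow_succ_left [DecidableEq S] (A : S → S → ℝ≥0∞) (n : ℕ) (x y : S) :
    matPow A (n + 1) x y = ∑' z, A x z * matPow A n z y := by
  rw [show n + 1 = 1 + n by ring, matPow_add']
  simp_rw [matPow_one]

noncomputable def hzf [DecidableEq S] (A : S → S → ℝ≥0∞) (ρ : ℝ≥0∞) (z x : S) : ℝ≥0∞ :=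
  ∑' k : ℕ, ρ⁻¹ ^ k * matPow A k x z

lemma hzf_eq [DecidableEq S] (A : S → S → ℝ≥0∞) (ρ : ℝ≥0∞) (hρ0 : ρ ≠ 0) (hρT : ρ ≠ ⊤)
    (z x : S) :
    ρ * hzf A ρ z x = ρ * (if x = z then 1 else 0) + ∑' y, A x y * hzf A ρ z y := by
  have hcan : ρ * ρ⁻¹ = 1 := ENNReal.mul_inv_cancel hρ0 hρT
  have h1 : (∑' y, A x y * hzf A ρ z y) = ∑' k : ℕ, ρ⁻¹ ^ k * matPow A (k+1) x z := by
    unfold hzf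
    calc (∑' y, A x y * ∑' k : ℕ, ρ⁻¹ ^ k * matPow A k y z)
        = ∑' y, ∑' k : ℕ, ρ⁻¹ ^ k * (A x y * matPow A k y z) := by
          simp_rw [← ENNReal.tsum_mul_left]; congr 1; ext y; congr 1; ext k; ring
      _ = ∑' k : ℕ, ρ⁻¹ ^ k * ∑' y, A x y * matPow A k y z := by
          rw [ENNReal.tsum_comm]; simp_rw [ENNReal.tsum_mul_left]
      _ = ∑' k : ℕ, ρ⁻¹ ^ k * matPow A (k+1) x z := by
          simp_rw [← matPow_succ_left]
  have h2 : hzf A ρ z x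
      = (if x = z then 1 else 0) + ∑' k : ℕ, ρ⁻¹ ^ (k+1) * matPow A (k+1) x z := by
    unfold hzf
    rw [tsum_eq_zero_add' ENNReal.summable]
    simp [matPow]
  rw [h2, mul_add, h1, ← ENNReal.tsum_mul_left]
  congr 1
  exact tsum_congr fun k => by rw [pow_succ', ← mul_assoc, ← mul_assoc, hcan, one_mul]

lemma hzf_ne_top [DecidableEq S] (A : S → S → ℝ≥0∞) (ρ : ℝ≥0∞) (hρT : ρ ≠ ⊤)
    (hirr : ∀ x y : S, ∃ n, 1 ≤ n ∧ 0 < matPow A n x y)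
    (hRtrans : ∀ x, (∑' n : ℕ, ρ⁻¹ ^ (n + 1) * matPow A (n + 1) x x) ≠ ⊤)
    (z x : S) : hzf A ρ z x ≠ ⊤ := by
  obtain ⟨m, hm1, hmpos⟩ := hirr z x
  obtain ⟨m', rfl⟩ : ∃ m', m = m' + 1 := ⟨m - 1, by omega⟩
  set c := ρ⁻¹ ^ (m'+1) * matPow A (m'+1) z x with hcdef
  have hc : c ≠ 0 := by
    apply mul_ne_zero
    · exact pow_ne_zero _ (ENNReal.inv_ne_zero.mpr hρT)
    · exact hmpos.ne'
  have key : c * hzf A ρ z x ≤ ∑' n : ℕ, ρ⁻¹ ^ (n+1) * matPow A (n+1) z z := by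
    rw [hzf, ← ENNReal.tsum_mul_left]
    have h1 : ∀ k, c * (ρ⁻¹^k * matPow A k x z)
        ≤ (fun n => ρ⁻¹ ^ (n+1) * matPow A (n+1) z z) (k + m') := by
      intro k
      have hle : matPow A (m'+1) z x * matPow A k x z ≤ matPow A (m'+1+k) z z := by
        conv_rhs => rw [matPow_add']
        exact ENNReal.le_tsum x
      have heq : c * (ρ⁻¹^k * matPow A k x z)
          = ρ⁻¹^(m'+1+k) * (matPow A (m'+1) z x * matPow A k x z) := by
        rw [hcdef, pow_add]; ring
      rw [heq]
      simp only []
      have : (k + m') + 1 = m' + 1 + k := by ring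
      rw [this]
      exact mul_le_mul_right hle _
    calc (∑' k : ℕ, c * (ρ⁻¹^k * matPow A k x z))
        ≤ ∑' k : ℕ, (fun n => ρ⁻¹ ^ (n+1) * matPow A (n+1) z z) (k + m') :=
          ENNReal.tsum_le_tsum h1
      _ ≤ ∑' n : ℕ, ρ⁻¹ ^ (n+1) * matPow A (n+1) z z :=
          ENNReal.tsum_comp_le_tsum_of_injective (add_left_injective m') _
  intro htop
  rw [htop, ENNReal.mul_top hc] at key
  exact hRtrans z (top_le_iff.mp key)

lemma hzf_pos [DecidableEq S] (A : S → S → ℝ≥0∞) (ρ : ℝ≥0∞) (hρT : ρ ≠ ⊤)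
    (hirr : ∀ x y : S, ∃ n, 1 ≤ n ∧ 0 < matPow A n x y)
    (z x : S) : 0 < hzf A ρ z x := by
  obtain ⟨n, _, hnpos⟩ := hirr x z
  have : ρ⁻¹ ^ n * matPow A n x z ≤ hzf A ρ z x := ENNReal.le_tsum n
  refine lt_of_lt_of_le ?_ this
  exact ENNReal.mul_pos (pow_ne_zero _ (ENNReal.inv_ne_zero.mpr hρT)) hnpos.ne'

theorem exists_strictly_excessive_function [Countable S] [DecidableEq S]
    (A : S → S → ℝ≥0∞) (hfin : ∀ x y, A x y ≠ ⊤)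
    (hirr : ∀ x y : S, ∃ n, 1 ≤ n ∧ 0 < matPow A n x y)
    (ρ : ℝ≥0∞) (hρ0 : 0 < ρ) (hρT : ρ ≠ ⊤)
    (hρ : ∀ x, Tendsto (fun n : ℕ => (matPow A n x x) ^ ((n : ℝ)⁻¹))
        (atTop ⊓ Filter.principal {n : ℕ | 0 < matPow A n x x}) (nhds ρ))
    (hRtrans : ∀ x, (∑' n : ℕ, ρ⁻¹ ^ (n + 1) * matPow A (n + 1) x x) ≠ ⊤)
    (S' : Set S) (hS' : S'.Finite) :
    ∃ h : S → ℝ≥0∞, (∀ x, 0 < h x) ∧ (∀ x, h x ≠ ⊤) ∧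
      (∀ x, ∑' y, A x y * h y ≤ ρ * h x) ∧
      (∀ x ∈ S', ∑' y, A x y * h y < ρ * h x) := by
  cases isEmpty_or_nonempty S with
  | inl hE =>
    exact ⟨fun _ => 1, fun x => isEmptyElim x, fun x => isEmptyElim x,
      fun x => isEmptyElim x, fun x hx => isEmptyElim x⟩
  | inr hNE =>
    obtain ⟨z0⟩ := hNE
    have hρ0' : ρ ≠ 0 := hρ0.ne'
    set F := hS'.toFinset with hF
    set h : S → ℝ≥0∞ := fun x => hzf A ρ z0 x + ∑ z ∈ F, hzf A ρ z x with hh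
    have hpos : ∀ x, 0 < h x := fun x =>
      lt_of_lt_of_le (hzf_pos A ρ hρT hirr z0 x) le_self_add
    have hnt : ∀ x, h x ≠ ⊤ := by
      intro x
      refine ENNReal.add_ne_top.mpr ⟨hzf_ne_top A ρ hρT hirr hRtrans z0 x, ?_⟩
      exact (ENNReal.sum_lt_top.mpr
        (fun z _ => (hzf_ne_top A ρ hρT hirr hRtrans z x).lt_top)).ne
    have hAh : ∀ x, (∑' y, A x y * h y)
        = (∑' y, A x y * hzf A ρ z0 y) + ∑ z ∈ F, ∑' y, A x y * hzf A ρ z y := by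
      intro x
      calc (∑' y, A x y * h y)
          = ∑' y, (A x y * hzf A ρ z0 y + ∑ z ∈ F, A x y * hzf A ρ z y) :=
            tsum_congr fun y => by rw [hh]; simp only []; rw [mul_add, Finset.mul_sum]
        _ = (∑' y, A x y * hzf A ρ z0 y) + ∑' y, ∑ z ∈ F, A x y * hzf A ρ z y :=
            ENNReal.tsum_add
        _ = _ := by rw [Summable.tsum_finsetSum (fun i _ => ENNReal.summable)]
    have hkey : ∀ x, ρ * h x = (∑' y, A x y * h y)
        + (ρ * (if x = z0 then 1 else 0) + ∑ z ∈ F, ρ * (if x = z then 1 else 0)) := by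
      intro x
      rw [hAh x, hh]
      simp only []
      rw [mul_add, Finset.mul_sum, hzf_eq A ρ hρ0' hρT z0 x,
        Finset.sum_congr rfl (fun z _ => hzf_eq A ρ hρ0' hρT z x),
        Finset.sum_add_distrib]
      ring
    have hle : ∀ x, (∑' y, A x y * h y) ≤ ρ * h x := by
      intro x; rw [hkey x]; exact le_self_add
    refine ⟨h, hpos, hnt, hle, ?_⟩
    intro x hx
    have hAx : (∑' y, A x y * h y) ≠ ⊤ :=
      ne_top_of_le_ne_top (ENNReal.mul_ne_top hρT (hnt x)) (hle x)
    have hxF : x ∈ F := hS'.mem_toFinset.mpr hx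
    have h2 : ρ ≤ ∑ z ∈ F, ρ * (if x = z then 1 else 0) := by
      have := Finset.single_le_sum (f := fun z => ρ * (if x = z then 1 else 0))
        (fun i _ => zero_le) hxF
      simpa using this
    have hδ : ρ * (if x = z0 then 1 else 0) + ∑ z ∈ F, ρ * (if x = z then 1 else 0) ≠ 0 :=
      (lt_of_lt_of_le hρ0 (h2.trans le_add_self)).ne'
    rw [hkey x]
    exact ENNReal.lt_add_right hAx hδ
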